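/- Let C be a monoidal category and let (P, η) be a unital idempotent in C. For morphisms α, β : 𝟙 → P define their product α · β : 𝟙 → P as the composite λ_𝟙⁻¹ ≫ (α ⊗ β) ≫ (η ▷ P)⁻¹ ≫ λ_P, using that η ▷ P : 𝟙 ⊗ P → P ⊗ P is an isomorphism. Then for all f, g : P → P one has (η ≫ f) · (η ≫ g) = η ≫ f ≫ g; that is, precomposition with η carries composition in End(P) to the tensor-induced product on Hom(𝟙, P). -/

import Mathlib

open CategoryTheory Category MonoidalCategory

section Aux
variable {C : Type*} [Category C] [MonoidalCategory C]

/-- cancellation of right whiskering by `P`, for maps into `P`. -/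
lemma aux_whiskerRight_cancel (P : C) (η : 𝟙_ C ⟶ P) [IsIso (P ◁ η)]
    {X : C} {x y : X ⟶ P} (h : x ▷ P = y ▷ P) : x = y := by
  have h1 : x ▷ 𝟙_ C ≫ P ◁ η = y ▷ 𝟙_ C ≫ P ◁ η := by
    rw [← whisker_exchange, ← whisker_exchange, h]
  have h2 : x ▷ 𝟙_ C = y ▷ 𝟙_ C := (cancel_mono (P ◁ η)).mp h1
  calc x = (ρ_ X).inv ≫ (x ▷ 𝟙_ C) ≫ (ρ_ P).hom := by
            rw [rightUnitor_naturality, Iso.inv_hom_id_assoc]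
    _ = (ρ_ X).inv ≫ (y ▷ 𝟙_ C) ≫ (ρ_ P).hom := by rw [h2]
    _ = y := by rw [rightUnitor_naturality, Iso.inv_hom_id_assoc]

lemma aux_assoc (P : C) (η : 𝟙_ C ⟶ P) [IsIso (η ▷ P)] :
    ((inv (η ▷ P) ≫ (λ_ P).hom) ▷ P) ≫ (inv (η ▷ P) ≫ (λ_ P).hom)
      = (α_ P P P).hom ≫ (P ◁ (inv (η ▷ P) ≫ (λ_ P).hom)) ≫ (inv (η ▷ P) ≫ (λ_ P).hom) := by
  set m : P ⊗ P ⟶ P := inv (η ▷ P) ≫ (λ_ P).hom with hm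
  have hunit : (η ▷ P) ≫ m = (λ_ P).hom := by simp [hm]
  rw [← cancel_epi ((η ▷ P) ▷ P)]
  have hL : ((η ▷ P) ▷ P) ≫ (m ▷ P) ≫ m = ((λ_ P).hom ▷ P) ≫ m := by
    rw [← comp_whiskerRight_assoc, hunit]
  have hnat : ((η ▷ P) ▷ P) ≫ (α_ P P P).hom
      = (α_ (𝟙_ C) P P).hom ≫ (η ▷ (P ⊗ P)) := by
    simpa using associator_naturality η (𝟙 P) (𝟙 P)
  have hR : ((η ▷ P) ▷ P) ≫ (α_ P P P).hom ≫ (P ◁ m) ≫ m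
      = ((λ_ P).hom ▷ P) ≫ m := by
    rw [← assoc, hnat, assoc, ← whisker_exchange_assoc, hunit,
      leftUnitor_naturality, leftUnitor_tensor_hom_assoc, Iso.hom_inv_id_assoc]
  rw [hL, hR]

lemma aux_unit_right (P : C) (η : 𝟙_ C ⟶ P) [IsIso (η ▷ P)] [IsIso (P ◁ η)] :
    (P ◁ η) ≫ inv (η ▷ P) ≫ (λ_ P).hom = (ρ_ P).hom := by
  set m : P ⊗ P ⟶ P := inv (η ▷ P) ≫ (λ_ P).hom with hm
  have hunit : (η ▷ P) ≫ m = (λ_ P).hom := by simp [hm]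
  have hiso : IsIso m := by rw [hm]; infer_instance
  have h := aux_assoc P η
  rw [← hm] at h
  have h2 : (((P ◁ η) ≫ m) ▷ P) ≫ m = ((ρ_ P).hom ▷ P) ≫ m := by
    calc (((P ◁ η) ≫ m) ▷ P) ≫ m
        = ((P ◁ η) ▷ P) ≫ (m ▷ P) ≫ m := by rw [comp_whiskerRight_assoc]
      _ = ((P ◁ η) ▷ P) ≫ (α_ P P P).hom ≫ (P ◁ m) ≫ m := by rw [h]
      _ = (α_ P (𝟙_ C) P).hom ≫ (P ◁ (η ▷ P)) ≫ (P ◁ m) ≫ m := by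
            rw [← associator_naturality_middle_assoc]
      _ = (α_ P (𝟙_ C) P).hom ≫ (P ◁ (λ_ P).hom) ≫ m := by
            rw [← MonoidalCategory.whiskerLeft_comp_assoc, hunit]
      _ = ((ρ_ P).hom ▷ P) ≫ m := by rw [triangle_assoc]
  have h3 : ((P ◁ η) ≫ m) ▷ P = (ρ_ P).hom ▷ P := (cancel_mono m).mp h2
  exact aux_whiskerRight_cancel P η h3

end Aux

theorem statement5 {C : Type*} [Category C] [MonoidalCategory C]
    (P : C) (η : 𝟙_ C ⟶ P)
    [IsIso (η ▷ P)] [IsIso (P ◁ η)] :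
    ∀ f g : P ⟶ P,
      (λ_ (𝟙_ C)).inv ≫ ((η ≫ f) ⊗ₘ (η ≫ g)) ≫ inv (η ▷ P) ≫ (λ_ P).hom
        = η ≫ f ≫ g := by
  intro f g
  have hg : (P ◁ g) ≫ inv (η ▷ P) = inv (η ▷ P) ≫ (𝟙_ C ◁ g) := by
    rw [← cancel_epi (η ▷ P)]
    simp [← whisker_exchange_assoc]
  calc (λ_ (𝟙_ C)).inv ≫ ((η ≫ f) ⊗ₘ (η ≫ g)) ≫ inv (η ▷ P) ≫ (λ_ P).hom
      = (λ_ (𝟙_ C)).inv ≫ ((η ≫ f) ▷ 𝟙_ C) ≫ (P ◁ η) ≫ (P ◁ g) ≫ inv (η ▷ P) ≫ (λ_ P).hom := by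
        rw [MonoidalCategory.tensorHom_def, MonoidalCategory.whiskerLeft_comp]
        simp only [Category.assoc]
    _ = (λ_ (𝟙_ C)).inv ≫ ((η ≫ f) ▷ 𝟙_ C) ≫ (P ◁ η) ≫ inv (η ▷ P) ≫ (λ_ P).hom ≫ g := by
        rw [reassoc_of% hg, leftUnitor_naturality]
    _ = (λ_ (𝟙_ C)).inv ≫ ((η ≫ f) ▷ 𝟙_ C) ≫ (ρ_ P).hom ≫ g := by
        rw [reassoc_of% (aux_unit_right P η)]
    _ = η ≫ f ≫ g := by
        rw [rightUnitor_naturality_assoc, ← unitors_equal, Iso.inv_hom_id_assoc, assoc]
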